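/- In the ordinal interval [0, ω^α] (for a countable ordinal α ≥ 1), the maximal element ω^α is topologically distinguished: for every other point x ∈ [0, ω^α], every neighborhood U of ω^α, and every neighborhood V of x, the based spaces (U, ω^α) and (V, x) are not homeomorphic as pairs. -/

import Mathlib

open Topology Ordinal

section DerivedSetBasics

variable {X : Type*} [TopologicalSpace X]

lemma mem_derivedSet_iff_closure' {A : Set X} {x : X} :
    x ∈ derivedSet A ↔ x ∈ closure (A \ {x}) := by
  have h : 𝓝[A \ {x}] x = 𝓝[≠] x ⊓ Filter.principal A := by
    rw [nhdsWithin, nhdsWithin, Set.diff_eq, Set.inter_comm, ← Filter.inf_principal,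
      ← inf_assoc]
  rw [mem_derivedSet, AccPt, mem_closure_iff_nhdsWithin_neBot, h]

lemma derivedSet_subtype' {T : Set X} {S : Set T} {q : T} :
    q ∈ derivedSet S ↔ (q : X) ∈ derivedSet (((↑) : T → X) '' S) := by
  rw [mem_derivedSet_iff_closure', mem_derivedSet_iff_closure', closure_subtype,
    Set.image_diff Subtype.val_injective, Set.image_singleton]

lemma derivedSet_inter_open' {A O : Set X} (hO : IsOpen O) {x : X} (hx : x ∈ O) :
    x ∈ derivedSet A ↔ x ∈ derivedSet (A ∩ O) := by
  simp only [mem_derivedSet_iff_closure']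
  constructor
  · intro h
    rw [mem_closure_iff_nhds] at h ⊢
    intro t ht
    obtain ⟨y, hy1, hy2⟩ := h (t ∩ O) (Filter.inter_mem ht (hO.mem_nhds hx))
    exact ⟨y, hy1.1, ⟨⟨hy2.1, hy1.2⟩, hy2.2⟩⟩
  · exact fun h => closure_mono (Set.diff_subset_diff_left Set.inter_subset_left) h

end DerivedSetBasics

/-- The iterated Cantor–Bendixson derivative of the whole space. -/
noncomputable def itDer (X : Type*) [TopologicalSpace X] (β : Ordinal.{0}) : Set X :=
  ⋂ (γ : Ordinal.{0}) (_ : γ < β), derivedSet (itDer X γ)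
termination_by β
decreasing_by assumption

section ItDer

variable {X : Type*} [TopologicalSpace X]

lemma mem_itDer {β : Ordinal.{0}} {x : X} :
    x ∈ itDer X β ↔ ∀ γ < β, x ∈ derivedSet (itDer X γ) := by
  rw [itDer]; simp

lemma itDer_antitone {β γ : Ordinal.{0}} (h : γ ≤ β) : itDer X β ⊆ itDer X γ := fun x hx => by
  rw [mem_itDer] at *
  exact fun δ hδ => hx δ (hδ.trans_le h)

lemma homeo_image_derivedSet {Y : Type*} [TopologicalSpace Y] (e : X ≃ₜ Y) (A : Set X) :
    e '' derivedSet A = derivedSet (e '' A) := by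
  refine subset_antisymm (e.continuous.image_derivedSet e.injective) ?_
  intro y hy
  have h2 := e.symm.continuous.image_derivedSet e.symm.injective (A := e '' A)
  have him : ⇑e.symm '' (⇑e '' A) = A := by ext a; simp
  rw [him] at h2
  exact ⟨e.symm y, h2 ⟨y, hy, rfl⟩, e.apply_symm_apply y⟩

lemma itDer_image {Y : Type*} [TopologicalSpace Y] (e : X ≃ₜ Y) (β : Ordinal.{0}) :
    e '' itDer X β = itDer Y β := by
  induction β using Ordinal.induction with
  | h β IH =>
    rw [itDer, itDer, Set.image_iInter₂ e.bijective]
    exact Set.iInter₂_congr fun γ hγ => by rw [homeo_image_derivedSet, IH γ hγ]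

lemma itDer_subtype {T O : Set X} (hO : IsOpen O) (hsub : O ⊆ T) (β : Ordinal.{0}) :
    ∀ q (hq : q ∈ O), (⟨q, hsub hq⟩ : T) ∈ itDer T β ↔ q ∈ itDer X β := by
  induction β using Ordinal.induction with
  | h β IH =>
    intro q hq
    rw [mem_itDer, mem_itDer]
    refine forall₂_congr fun γ hγ => ?_
    rw [derivedSet_subtype', derivedSet_inter_open' hO hq
      (A := ((↑) : T → X) '' itDer (↥T) γ), derivedSet_inter_open' hO hq (A := itDer X γ)]
    have hEq : (((↑) : T → X) '' itDer (↥T) γ) ∩ O = itDer X γ ∩ O := by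
      ext z
      simp only [Set.mem_inter_iff, Set.mem_image]
      constructor
      · rintro ⟨⟨w, hw, rfl⟩, hzO⟩
        exact ⟨(IH γ hγ (w : X) hzO).mp hw, hzO⟩
      · rintro ⟨hz, hzO⟩
        exact ⟨⟨⟨z, hsub hzO⟩, (IH γ hγ z hzO).mpr hz, rfl⟩, hzO⟩
    rw [hEq]

end ItDer

section OrdinalComputation

/-- Accumulation points of sets of multiples of `ω^γ` are nonzero multiples of `ω^(γ+1)`. -/
lemma isAcc_dvd {γ y : Ordinal.{0}} {S : Set Ordinal.{0}} (hS : ∀ z ∈ S, omega0 ^ γ ∣ z)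
    (h : y.IsAcc S) : omega0 ^ (γ + 1) ∣ y ∧ y ≠ 0 := by
  have hy0 : y ≠ 0 := h.pos.ne'
  have hpos : (0 : Ordinal) < omega0 ^ γ := opow_pos _ omega0_pos
  have hne : omega0 ^ γ ≠ 0 := hpos.ne'
  have hdvd : omega0 ^ γ ∣ y := by
    by_contra hr
    have hrpos : y % omega0 ^ γ ≠ 0 := fun h0 => hr (Ordinal.dvd_of_mod_eq_zero h0)
    have hlt : omega0 ^ γ * (y / omega0 ^ γ) < y := by
      conv_rhs => rw [← Ordinal.div_add_mod y (omega0 ^ γ)]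
      have := add_lt_add_iff_left (omega0 ^ γ * (y / omega0 ^ γ))
        (b := 0) (c := y % omega0 ^ γ)
      rw [add_zero] at this
      exact this.2 (pos_iff_ne_zero.2 hrpos)
    obtain ⟨z, hzS, hz1, hz2⟩ := h.forall_lt _ hlt
    obtain ⟨s, rfl⟩ := hS z hzS
    have hsle : s ≤ y / omega0 ^ γ := (Ordinal.le_div hne).2 hz2.le
    exact absurd ((mul_le_mul_iff_right₀ hpos).2 hsle) (not_le.2 hz1)
  obtain ⟨q, rfl⟩ := hdvd
  have hq0 : q ≠ 0 := by rintro rfl; simp at hy0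
  have hqlim : Order.IsSuccLimit q := by
    refine ((Ordinal.zero_or_succ_or_isSuccLimit q).resolve_left hq0).resolve_left ?_
    rintro ⟨t, rfl⟩
    have hlt : omega0 ^ γ * t < omega0 ^ γ * Order.succ t :=
      (mul_lt_mul_iff_right₀ hpos).2 (Order.lt_succ t)
    obtain ⟨z, hzS, hz1, hz2⟩ := h.forall_lt _ hlt
    obtain ⟨s, rfl⟩ := hS z hzS
    have h1 : t < s := (mul_lt_mul_iff_right₀ hpos).1 hz1
    have h2 : s < Order.succ t := (mul_lt_mul_iff_right₀ hpos).1 hz2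
    exact absurd h1 (not_lt.2 (Order.lt_succ_iff.1 h2))
  obtain ⟨hq0', hωdvd⟩ := Ordinal.isSuccLimit_iff_omega0_dvd.1 hqlim
  refine ⟨?_, hy0⟩
  rw [Ordinal.add_one_eq_succ, opow_succ]
  exact mul_dvd_mul_left _ hωdvd

lemma itDer_upper (c : Ordinal.{0}) (β : Ordinal.{0}) :
    ∀ y (hy : y ∈ Set.Iic c), (⟨y, hy⟩ : Set.Iic c) ∈ itDer (Set.Iic c) β →
      omega0 ^ β ∣ y ∧ (β ≠ 0 → y ≠ 0) := by
  induction β using Ordinal.induction with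
  | h β IH =>
    intro y hy hmem
    rcases Ordinal.zero_or_succ_or_isSuccLimit β with rfl | ⟨γ, rfl⟩ | hβ
    · simp
    · have h1 : (⟨y, hy⟩ : Set.Iic c) ∈ derivedSet (itDer (Set.Iic c) γ) :=
        (mem_itDer.mp hmem) γ (Order.lt_succ γ)
      rw [derivedSet_subtype'] at h1
      have hacc : y.IsAcc (((↑) : Set.Iic c → Ordinal) '' itDer (Set.Iic c) γ) := h1
      have hS : ∀ z ∈ (((↑) : Set.Iic c → Ordinal) '' itDer (Set.Iic c) γ),
          omega0 ^ γ ∣ z := by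
        rintro z ⟨w, hw, rfl⟩
        exact (IH γ (Order.lt_succ γ) (w : Ordinal) w.2 hw).1
      have := isAcc_dvd hS hacc
      rw [← Ordinal.add_one_eq_succ]
      exact ⟨this.1, fun _ => this.2⟩
    · have hy0 : y ≠ 0 := by
        have h1 : (⟨y, hy⟩ : Set.Iic c) ∈ derivedSet (itDer (Set.Iic c) 0) :=
          (mem_itDer.mp hmem) 0 hβ.pos
        rw [derivedSet_subtype'] at h1
        exact (Ordinal.IsAcc.pos h1).ne'
      refine ⟨?_, fun _ => hy0⟩
      have key : ∀ γ < β, omega0 ^ γ ∣ y := fun γ hγ =>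
        (IH γ hγ y hy (itDer_antitone hγ.le hmem)).1
      have hβ0 : omega0 ^ β ≠ 0 := opow_ne_zero _ omega0_ne_zero
      rcases eq_or_ne (y % omega0 ^ β) 0 with h0 | h0
      · exact Ordinal.dvd_of_mod_eq_zero h0
      · exfalso
        have hrlt : y % omega0 ^ β < omega0 ^ β := Ordinal.mod_lt y hβ0
        obtain ⟨γ, hγβ, hrγ⟩ := (Ordinal.lt_opow_of_isSuccLimit omega0_ne_zero hβ).1 hrlt
        have h2 : omega0 ^ γ ∣ omega0 ^ β * (y / omega0 ^ β) :=
          (opow_dvd_opow _ hγβ.le).mul_right _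
        have h3 : omega0 ^ γ ∣ y % omega0 ^ β :=
          (Ordinal.dvd_add_iff h2).1 (by rw [Ordinal.div_add_mod]; exact key γ hγβ)
        exact absurd (Ordinal.le_of_dvd h0 h3) (not_le.2 hrγ)

lemma itDer_lower (c : Ordinal.{0}) (β : Ordinal.{0}) :
    ∀ y (hy : y ∈ Set.Iic c), y ≠ 0 → omega0 ^ β ∣ y →
      (⟨y, hy⟩ : Set.Iic c) ∈ itDer (Set.Iic c) β := by
  induction β using Ordinal.induction with
  | h β IH =>
    intro y hy hy0 hdvd
    rw [mem_itDer]
    intro γ hγ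
    rw [derivedSet_subtype']
    have hsub : {z : Ordinal | z ∈ Set.Iic c ∧ z ≠ 0 ∧ omega0 ^ γ ∣ z} ⊆
        (((↑) : Set.Iic c → Ordinal) '' itDer (Set.Iic c) γ) := by
      rintro z ⟨hzc, hz0, hzd⟩
      exact ⟨⟨z, hzc⟩, IH γ hγ z hzc hz0 hzd, rfl⟩
    refine Ordinal.IsAcc.mono hsub ?_
    rw [Ordinal.isAcc_iff]
    refine ⟨hy0, fun p hp => ?_⟩
    have hpos : (0 : Ordinal) < omega0 ^ γ := opow_pos _ omega0_pos
    have hsd : omega0 ^ (γ + 1) ∣ y := dvd_trans (opow_dvd_opow _ (by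
      rw [Ordinal.add_one_eq_succ]; exact Order.succ_le_of_lt hγ)) hdvd
    obtain ⟨s, hs⟩ := hsd
    have hs0 : s ≠ 0 := by rintro rfl; rw [mul_zero] at hs; exact hy0 hs
    have hy' : y = omega0 ^ γ * (omega0 * s) := by
      rw [hs, Ordinal.add_one_eq_succ, opow_succ, mul_assoc]
    have hlim : Order.IsSuccLimit (omega0 * s) :=
      Ordinal.isSuccLimit_mul_left isSuccLimit_omega0 (pos_iff_ne_zero.2 hs0)
    have hp' : p < omega0 ^ γ * (omega0 * s) := hy' ▸ hp
    obtain ⟨t, htlt, hpt⟩ := (Ordinal.lt_mul_iff_of_isSuccLimit hlim).1 hp'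
    have hzy : omega0 ^ γ * Order.succ t < y := by
      rw [hy']
      exact (mul_lt_mul_iff_right₀ hpos).2 (hlim.succ_lt htlt)
    refine ⟨omega0 ^ γ * Order.succ t, ⟨?_, ?_, ?_⟩, ?_, ?_⟩
    · exact le_trans hzy.le hy
    · exact (_root_.mul_ne_zero hpos.ne' (Ordinal.succ_ne_zero t))
    · exact dvd_mul_right _ _
    · exact hpt.trans_le ((mul_le_mul_iff_right₀ hpos).2 (Order.le_succ t))
    · exact hzy

end OrdinalComputation

/-- In `[0, ω^α]` (with `1 ≤ α` countable), the maximal point `ω^α` is topologically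
distinguished: for any other point `x`, any neighbourhood `U` of `ω^α` and any
neighbourhood `V` of `x`, there is no homeomorphism of pairs `(U, ω^α) ≅ (V, x)`. -/
theorem stmt8 (α : Ordinal.{0}) (h1 : 1 ≤ α) (h2 : α.card ≤ Cardinal.aleph0)
    (x : Set.Iic (omega0 ^ α)) (hx : (x : Ordinal.{0}) ≠ omega0 ^ α)
    (U V : Set (Set.Iic (omega0 ^ α)))
    (hU : U ∈ 𝓝 (⟨omega0 ^ α, Set.self_mem_Iic⟩ : Set.Iic (omega0 ^ α))) (hV : V ∈ 𝓝 x)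
    (e : U ≃ₜ V) :
    (e ⟨⟨omega0 ^ α, Set.self_mem_Iic⟩, mem_of_mem_nhds hU⟩ : Set.Iic (omega0 ^ α)) ≠ x := by
  intro hcon
  have htop : (⟨omega0 ^ α, Set.self_mem_Iic⟩ : Set.Iic (omega0 ^ α)) ∈
      itDer (Set.Iic (omega0 ^ α)) α :=
    itDer_lower _ α _ Set.self_mem_Iic (opow_ne_zero _ omega0_ne_zero) dvd_rfl
  obtain ⟨O, hOU, hO, htopO⟩ := mem_nhds_iff.1 hU
  obtain ⟨O', hO'V, hO', hxO'⟩ := mem_nhds_iff.1 hV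
  have hmem1 : (⟨⟨omega0 ^ α, Set.self_mem_Iic⟩, mem_of_mem_nhds hU⟩ : U) ∈ itDer U α :=
    (itDer_subtype hO hOU α _ htopO).2 htop
  have hmem2 : (e ⟨⟨omega0 ^ α, Set.self_mem_Iic⟩, mem_of_mem_nhds hU⟩ : V) ∈ itDer V α := by
    rw [← itDer_image (e : U ≃ₜ V) α]
    exact ⟨_, hmem1, rfl⟩
  have hEq : (e ⟨⟨omega0 ^ α, Set.self_mem_Iic⟩, mem_of_mem_nhds hU⟩ : V) =
      ⟨x, hO'V hxO'⟩ := Subtype.ext hcon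
  rw [hEq] at hmem2
  have h4 : x ∈ itDer (Set.Iic (omega0 ^ α)) α := (itDer_subtype hO' hO'V α x hxO').1 hmem2
  have h5 := itDer_upper (omega0 ^ α) α (x : Ordinal) x.2 h4
  have hα0 : α ≠ 0 := by rintro rfl; exact absurd h1 (by simp)
  have hle : omega0 ^ α ≤ (x : Ordinal) := Ordinal.le_of_dvd (h5.2 hα0) h5.1
  exact hx (le_antisymm x.2 hle)
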